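/- arXiv:1605.01513 — 5 statements merged into one kernel-verified Lean document; each statement's English description precedes it below -/
import Mathlib

section
/- Let n ≥ 3 be odd. A function f : ℝ^N → ℝ has a Taylor expansion of order n at a point x if and only if it has a Taylor expansion of order n−1 at x and both ∂^n f(x) and ∂_+^n f(x) are nonempty. In this case ∂^n f(x) = ∂_+^n f(x) = {P_x^n}, the n-homogeneous part of the Taylor expansion of order n of f at x. -/
open Filter Topology Finset

noncomputable section

/-- ℝ^N with the Euclidean norm. -/
abbrev Euc (N : ℕ) := EuclideanSpace ℝ (Fin N)

/-- `P : ℝ^N → F` is a `k`-homogeneous polynomial, i.e. the restriction to the diagonal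
of a continuous `k`-multilinear map. -/
def IsHomogPoly {N : ℕ} {F : Type*} [NormedAddCommGroup F] [NormedSpace ℝ F]
    (k : ℕ) (P : Euc N → F) : Prop :=
  ∃ M : ContinuousMultilinearMap ℝ (fun _ : Fin k => Euc N) F, ∀ v, P v = M (fun _ => v)

/-- `f` has a Taylor expansion of order `n` at `x`, with `k`-homogeneous parts `P k`. -/
def HasTaylorExpansion {N : ℕ} {F : Type*} [NormedAddCommGroup F] [NormedSpace ℝ F]
    (f : Euc N → F) (x : Euc N) (P : ℕ → Euc N → F) (n : ℕ) : Prop :=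
  (∀ k ∈ Finset.Icc 1 n, IsHomogPoly k (P k)) ∧
  Tendsto (fun h => ‖f (x + h) - f x - ∑ k ∈ Finset.Icc 1 n, P k h‖ / ‖h‖ ^ n)
    (𝓝[≠] (0 : Euc N)) (𝓝 0)

/-- `Q ∈ ∂ⁿ f(x)`: `Q` is an `n`-homogeneous polynomial with
`liminf_{h→0} (f(x+h) − f(x) − Σ_{k=1}^{n-1} P_k(h) − Q(h))/|h|ⁿ ≥ 0`,
where `P k`, `k = 1, …, n-1`, are the homogeneous parts of the Taylor expansion of
order `n-1` of `f` at `x` (`P 1 = Df(x)`). -/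
def SubPoly {N : ℕ} (f : Euc N → ℝ) (x : Euc N) (P : ℕ → Euc N → ℝ) (n : ℕ)
    (Q : Euc N → ℝ) : Prop :=
  IsHomogPoly n Q ∧ ∀ ε > (0 : ℝ), ∀ᶠ h in 𝓝[≠] (0 : Euc N),
    -ε ≤ (f (x + h) - f x - ∑ k ∈ Finset.Icc 1 (n - 1), P k h - Q h) / ‖h‖ ^ n

/-- `Q ∈ ∂₊ⁿ f(x)`: the superdifferential condition
`limsup_{h→0} (f(x+h) − f(x) − Σ_{k=1}^{n-1} P_k(h) − Q(h))/|h|ⁿ ≤ 0`. -/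
def SupPoly {N : ℕ} (f : Euc N → ℝ) (x : Euc N) (P : ℕ → Euc N → ℝ) (n : ℕ)
    (Q : Euc N → ℝ) : Prop :=
  IsHomogPoly n Q ∧ ∀ ε > (0 : ℝ), ∀ᶠ h in 𝓝[≠] (0 : Euc N),
    (f (x + h) - f x - ∑ k ∈ Finset.Icc 1 (n - 1), P k h - Q h) / ‖h‖ ^ n ≤ ε
lemma homog_smul {N n : ℕ} {Q : Euc N → ℝ} (hQ : IsHomogPoly n Q) (t : ℝ) (v : Euc N) :
    Q (t • v) = t ^ n * Q v := by
  obtain ⟨M, hM⟩ := hQ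
  rw [hM, hM,
    show (fun _ : Fin n => t • v) = (fun i : Fin n => (fun _ : Fin n => t) i • (fun _ : Fin n => v) i) from rfl,
    M.map_smul_univ]
  simp [smul_eq_mul]

lemma homog_zero {N n : ℕ} (hn : 1 ≤ n) {Q : Euc N → ℝ} (hQ : IsHomogPoly n Q) :
    Q 0 = 0 := by
  have := homog_smul hQ 0 0
  simpa [zero_pow (by omega : n ≠ 0)] using this

lemma le_of_eventually_le {N n : ℕ} (hn : 1 ≤ n) {S T : Euc N → ℝ}
    (hS : IsHomogPoly n S) (hT : IsHomogPoly n T)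
    (hev : ∀ ε > (0:ℝ), ∀ᶠ h in 𝓝[≠] (0 : Euc N), S h ≤ T h + ε * ‖h‖ ^ n) (v : Euc N) :
    S v ≤ T v := by
  rcases eq_or_ne v 0 with rfl | hv
  · rw [homog_zero hn hS, homog_zero hn hT]
  · have hvpos : (0:ℝ) < ‖v‖ ^ n := pow_pos (norm_pos_iff.mpr hv) n
    have key : ∀ ε > (0:ℝ), S v ≤ T v + ε * ‖v‖ ^ n := by
      intro ε hε
      have htend : Tendsto (fun t : ℝ => t • v) (𝓝[>] (0:ℝ)) (𝓝[≠] (0 : Euc N)) := by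
        apply tendsto_nhdsWithin_of_tendsto_nhds_of_eventually_within
        · have : Tendsto (fun t : ℝ => t • v) (𝓝 0) (𝓝 0) := by
            have := (continuous_id.smul (continuous_const (y := v))).tendsto (0:ℝ)
            simpa [Pi.smul_def'] using this
          exact this.mono_left nhdsWithin_le_nhds
        · filter_upwards [self_mem_nhdsWithin] with t ht
          exact smul_ne_zero (ne_of_gt ht) hv
      obtain ⟨t, hle, ht⟩ := ((htend.eventually (hev ε hε)).and self_mem_nhdsWithin).exists
      have ht : (0:ℝ) < t := ht
      rw [homog_smul hS, homog_smul hT, norm_smul, mul_pow, Real.norm_eq_abs,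
        abs_of_pos ht] at hle
      have htn : (0:ℝ) < t ^ n := pow_pos ht n
      have : t ^ n * S v ≤ t ^ n * (T v + ε * ‖v‖ ^ n) := by ring_nf; ring_nf at hle; linarith
      exact le_of_mul_le_mul_left this htn
    have : ∀ ε > (0:ℝ), S v ≤ T v + ε := by
      intro ε hε
      have := key (ε / ‖v‖ ^ n) (div_pos hε hvpos)
      rwa [div_mul_cancel₀ _ (ne_of_gt hvpos)] at this
    exact le_of_forall_pos_le_add this

lemma tendsto_iff_bounds {N : ℕ} (r : Euc N → ℝ) :
    Tendsto r (𝓝[≠] (0 : Euc N)) (𝓝 0) ↔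
      ((∀ ε > (0:ℝ), ∀ᶠ h in 𝓝[≠] (0:Euc N), -ε ≤ r h) ∧
       (∀ ε > (0:ℝ), ∀ᶠ h in 𝓝[≠] (0:Euc N), r h ≤ ε)) := by
  rw [Metric.tendsto_nhds]
  constructor
  · intro H
    constructor <;> intro ε hε <;> filter_upwards [H ε hε] with h hh <;>
    · rw [Real.dist_eq, sub_zero] at hh
      have := abs_lt.mp hh
      linarith [this.1, this.2]
  · rintro ⟨h1, h2⟩ ε hε
    filter_upwards [h1 (ε/2) (by linarith), h2 (ε/2) (by linarith)] with h ha hb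
    rw [Real.dist_eq, sub_zero, abs_lt]
    constructor <;> linarith

lemma norm_div_tendsto {N n : ℕ} (g : Euc N → ℝ) :
    Tendsto (fun h => ‖g h‖ / ‖h‖ ^ n) (𝓝[≠] (0:Euc N)) (𝓝 0) ↔
    Tendsto (fun h => g h / ‖h‖ ^ n) (𝓝[≠] (0:Euc N)) (𝓝 0) := by
  have e : (fun h : Euc N => ‖g h‖ / ‖h‖ ^ n) = fun h => ‖g h / ‖h‖ ^ n‖ := by
    funext h; rw [norm_div, norm_pow, norm_norm]
  rw [e]
  exact tendsto_zero_iff_norm_tendsto_zero.symm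


lemma sum_split {N : ℕ} (P : ℕ → Euc N → ℝ) (m : ℕ) (h : Euc N) :
    ∑ k ∈ Finset.Icc 1 (m+1), P k h = (∑ k ∈ Finset.Icc 1 m, P k h) + P (m+1) h :=
  Finset.sum_Icc_succ_top (by omega) _

lemma bounds_iff {N m : ℕ} (f : Euc N → ℝ) (x : Euc N) (P : ℕ → Euc N → ℝ) (Q : Euc N → ℝ) :
    Tendsto (fun h => ‖f (x + h) - f x - ((∑ k ∈ Finset.Icc 1 m, P k h) + Q h)‖ / ‖h‖ ^ (m+1))
      (𝓝[≠] (0:Euc N)) (𝓝 0) ↔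
    ((∀ ε > (0:ℝ), ∀ᶠ h in 𝓝[≠] (0:Euc N),
        -ε ≤ (f (x + h) - f x - ∑ k ∈ Finset.Icc 1 m, P k h - Q h) / ‖h‖ ^ (m+1)) ∧
     (∀ ε > (0:ℝ), ∀ᶠ h in 𝓝[≠] (0:Euc N),
        (f (x + h) - f x - ∑ k ∈ Finset.Icc 1 m, P k h - Q h) / ‖h‖ ^ (m+1) ≤ ε)) := by
  have e : (fun h : Euc N => ‖f (x + h) - f x - ((∑ k ∈ Finset.Icc 1 m, P k h) + Q h)‖ / ‖h‖ ^ (m+1))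
      = fun h => ‖f (x + h) - f x - ∑ k ∈ Finset.Icc 1 m, P k h - Q h‖ / ‖h‖ ^ (m+1) := by
    funext h; rw [sub_add_eq_sub_sub]
  rw [e, norm_div_tendsto, tendsto_iff_bounds]

lemma taylor_drop {N m : ℕ} {f : Euc N → ℝ} {x : Euc N} {P : ℕ → Euc N → ℝ}
    (H : HasTaylorExpansion f x P (m+1)) : HasTaylorExpansion f x P m := by
  obtain ⟨hhom, htend⟩ := H
  refine ⟨fun k hk => hhom k (by simp only [Finset.mem_Icc] at hk ⊢; omega), ?_⟩
  obtain ⟨M, hM⟩ := hhom (m+1) (by simp)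
  set C := ‖M‖ with hC
  have hPbound : ∀ h : Euc N, ‖P (m+1) h‖ ≤ C * ‖h‖^(m+1) := by
    intro h
    rw [hM]
    calc ‖M fun _ => h‖ ≤ C * ∏ _i : Fin (m+1), ‖h‖ := M.le_opNorm _
    _ = C * ‖h‖^(m+1) := by rw [Finset.prod_const]; simp
  have hnorm : Tendsto (fun h : Euc N => ‖h‖) (𝓝[≠] (0:Euc N)) (𝓝 0) := by
    have := (continuous_norm (E := Euc N)).tendsto 0
    simpa using this.mono_left nhdsWithin_le_nhds
  apply squeeze_zero'
    (g := fun h : Euc N =>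
      (‖f (x + h) - f x - ∑ k ∈ Finset.Icc 1 (m+1), P k h‖ / ‖h‖ ^ (m+1) + C) * ‖h‖)
  · filter_upwards with h; positivity
  · filter_upwards [self_mem_nhdsWithin] with h hne
    have hpos : (0:ℝ) < ‖h‖ := norm_pos_iff.mpr hne
    have hm : (0:ℝ) < ‖h‖ ^ m := pow_pos hpos m
    have hm1 : (0:ℝ) < ‖h‖ ^ (m+1) := pow_pos hpos (m+1)
    set A := f (x + h) - f x - ∑ k ∈ Finset.Icc 1 m, P k h with hA
    have hsum : f (x + h) - f x - ∑ k ∈ Finset.Icc 1 (m+1), P k h = A - P (m+1) h := by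
      rw [sum_split]; ring
    rw [hsum]
    have h1 : ‖A‖ ≤ ‖A - P (m+1) h‖ + C * ‖h‖^(m+1) := by
      calc ‖A‖ = ‖(A - P (m+1) h) + P (m+1) h‖ := by ring_nf
      _ ≤ ‖A - P (m+1) h‖ + ‖P (m+1) h‖ := norm_add_le _ _
      _ ≤ ‖A - P (m+1) h‖ + C * ‖h‖^(m+1) := by linarith [hPbound h]
    rw [div_le_iff₀ hm]
    have e2 : (‖A - P (m+1) h‖ / ‖h‖ ^ (m+1) + C) * ‖h‖ * ‖h‖ ^ m
        = ‖A - P (m+1) h‖ + C * ‖h‖^(m+1) := by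
      rw [pow_succ]
      field_simp
    rw [e2]
    exact h1
  · have := (htend.add_const C).mul hnorm
    simpa using this

lemma taylor_top_mem {N m : ℕ} {f : Euc N → ℝ} {x : Euc N} {P : ℕ → Euc N → ℝ}
    (H : HasTaylorExpansion f x P (m+1)) :
    SubPoly f x P (m+1) (P (m+1)) ∧ SupPoly f x P (m+1) (P (m+1)) := by
  have hhom := H.1 (m+1) (by simp)
  have ht := H.2
  simp only [sum_split] at ht
  rw [bounds_iff] at ht
  simp only [SubPoly, SupPoly, Nat.add_sub_cancel]
  exact ⟨⟨hhom, ht.1⟩, ⟨hhom, ht.2⟩⟩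

lemma taylor_of_bounds {N m : ℕ} {f : Euc N → ℝ} {x : Euc N} {P : ℕ → Euc N → ℝ}
    {Q : Euc N → ℝ}
    (hhomP : ∀ k ∈ Finset.Icc 1 m, IsHomogPoly k (P k))
    (hQ : SubPoly f x P (m+1) Q) (hQ' : SupPoly f x P (m+1) Q) :
    HasTaylorExpansion f x (fun k => if k = m+1 then Q else P k) (m+1) := by
  constructor
  · intro k hk
    simp only [Finset.mem_Icc] at hk
    by_cases hkm : k = m+1
    · simpa [hkm] using hQ.1
    · simp only [hkm, if_false]
      exact hhomP k (by simp only [Finset.mem_Icc]; omega)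
  · have esum : ∀ h : Euc N,
        ∑ k ∈ Finset.Icc 1 (m+1), (if k = m+1 then Q else P k) h
          = (∑ k ∈ Finset.Icc 1 m, P k h) + Q h := by
      intro h
      rw [sum_split]
      simp only [if_pos rfl]
      congr 1
      apply Finset.sum_congr rfl
      intro k hk
      simp only [Finset.mem_Icc] at hk
      rw [if_neg (by omega)]
    simp only [esum]
    rw [bounds_iff]
    simp only [SubPoly, SupPoly, Nat.add_sub_cancel] at hQ hQ'
    exact ⟨hQ.2, hQ'.2⟩

lemma sub_eq_sup {N n : ℕ} (hodd : Odd n) {f : Euc N → ℝ} {x : Euc N} {P : ℕ → Euc N → ℝ}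
    {Q₁ Q₂ : Euc N → ℝ} (h1 : SubPoly f x P n Q₁) (h2 : SupPoly f x P n Q₂) : Q₁ = Q₂ := by
  have hn : 1 ≤ n := hodd.pos
  have hle : ∀ v, Q₁ v ≤ Q₂ v := by
    apply le_of_eventually_le hn h1.1 h2.1
    intro ε hε
    filter_upwards [h1.2 (ε/2) (by linarith), h2.2 (ε/2) (by linarith),
      self_mem_nhdsWithin] with h ha hb hne
    have hne' : h ≠ 0 := hne
    have hpos : (0:ℝ) < ‖h‖ ^ n := pow_pos (norm_pos_iff.mpr hne') n
    have hcomb : (Q₁ h - Q₂ h) / ‖h‖ ^ n ≤ ε := by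
      have e : (Q₁ h - Q₂ h) / ‖h‖ ^ n
          = (f (x + h) - f x - ∑ k ∈ Finset.Icc 1 (n-1), P k h - Q₂ h) / ‖h‖ ^ n
          - (f (x + h) - f x - ∑ k ∈ Finset.Icc 1 (n-1), P k h - Q₁ h) / ‖h‖ ^ n := by
        rw [div_sub_div_same]; ring_nf
      rw [e]; linarith
    have := (div_le_iff₀ hpos).mp hcomb
    linarith
  have hge : ∀ v, Q₂ v ≤ Q₁ v := by
    intro v
    have h0 := hle (-v)
    rw [show -v = (-1:ℝ) • v by simp, homog_smul h1.1, homog_smul h2.1,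
      hodd.neg_one_pow] at h0
    linarith
  funext v
  exact le_antisymm (hle v) (hge v)

/-- For odd `n ≥ 3`: `f` has a Taylor expansion of order `n` at `x` iff it has one of
order `n-1` and both `∂ⁿ f(x)` and `∂₊ⁿ f(x)` are nonempty; in that case
`∂ⁿ f(x) = ∂₊ⁿ f(x) = {Pₓⁿ}`. -/
theorem taylor_iff_sub_and_sup_odd {N n : ℕ} (hn : 3 ≤ n) (hodd : Odd n)
    (f : Euc N → ℝ) (x : Euc N) :
    ((∃ P : ℕ → Euc N → ℝ, HasTaylorExpansion f x P n) ↔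
      (∃ P : ℕ → Euc N → ℝ, HasTaylorExpansion f x P (n - 1) ∧
        (∃ Q, SubPoly f x P n Q) ∧ (∃ Q, SupPoly f x P n Q))) ∧
    ∀ P : ℕ → Euc N → ℝ, HasTaylorExpansion f x P n →
      ∀ Q : Euc N → ℝ, (SubPoly f x P n Q ↔ Q = P n) ∧ (SupPoly f x P n Q ↔ Q = P n) := by
  obtain ⟨m, rfl⟩ : ∃ m, n = m + 1 := ⟨n - 1, by omega⟩
  have hm1 : m + 1 - 1 = m := by omega
  constructor
  · constructor
    · rintro ⟨P, hP⟩
      obtain ⟨hsub, hsup⟩ := taylor_top_mem hP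
      exact ⟨P, by rw [hm1]; exact taylor_drop hP, ⟨P (m+1), hsub⟩, ⟨P (m+1), hsup⟩⟩
    · rintro ⟨P, hPm, ⟨Q₁, hQ₁⟩, ⟨Q₂, hQ₂⟩⟩
      have hQeq : Q₁ = Q₂ := sub_eq_sup hodd hQ₁ hQ₂
      rw [hm1] at hPm
      exact ⟨_, taylor_of_bounds hPm.1 hQ₁ (hQeq ▸ hQ₂)⟩
  · intro P hP Q
    obtain ⟨hsub, hsup⟩ := taylor_top_mem hP
    constructor
    · constructor
      · intro hQ
        exact sub_eq_sup hodd hQ hsup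
      · rintro rfl; exact hsub
    · constructor
      · intro hQ
        exact (sub_eq_sup hodd hsub hQ).symm
      · rintro rfl; exact hsup
end
end

section
/- If f has a Taylor expansion of order n−1 at x₀ and Q ∈ ∂^n f(x₀) ∩ ∂_+^n f(x₀), then f has a Taylor expansion of order n at x₀ with n-homogeneous part Q, and Q is the unique polynomial with this property. -/
open Filter Topology Finset

noncomputable section

/-- If `f` has a Taylor expansion of order `n-1` at `x₀` and `Q ∈ ∂ⁿ f(x₀) ∩ ∂₊ⁿ f(x₀)`,
then `f` has a Taylor expansion of order `n` at `x₀` whose `n`-homogeneous part is `Q`,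
and `Q` is the unique polynomial with this property. -/
theorem taylor_of_sub_inter_sup {N n : ℕ} (hn : 2 ≤ n)
    (f : Euc N → ℝ) (x₀ : Euc N) (P : ℕ → Euc N → ℝ)
    (hP : HasTaylorExpansion f x₀ P (n - 1)) (Q : Euc N → ℝ)
    (hsub : SubPoly f x₀ P n Q) (hsup : SupPoly f x₀ P n Q) :
    HasTaylorExpansion f x₀ (Function.update P n Q) n ∧
    ∀ Q' : Euc N → ℝ, IsHomogPoly n Q' →
      HasTaylorExpansion f x₀ (Function.update P n Q') n → Q' = Q := by
  obtain ⟨hQhom, hsub2⟩ := hsub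
  obtain ⟨-, hsup2⟩ := hsup
  obtain ⟨hPhom, -⟩ := hP
  have hn1 : 1 ≤ n := by omega
  have hins : insert n (Finset.Icc 1 (n-1)) = Finset.Icc 1 n := by
    have h1 : Finset.Icc 1 (n-1) = Finset.Ico 1 n := by
      rw [← Finset.Ico_add_one_right_eq_Icc]; congr 1; omega
    rw [h1, Finset.Ico_insert_right hn1]
  have hnot : n ∉ Finset.Icc 1 (n-1) := by
    simp only [Finset.mem_Icc]; omega
  have hsum : ∀ (R : Euc N → ℝ) (h : Euc N),
      ∑ k ∈ Finset.Icc 1 n, Function.update P n R k h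
      = ∑ k ∈ Finset.Icc 1 (n-1), P k h + R h := by
    intro R h
    rw [← hins, Finset.sum_insert hnot, Function.update_self]
    rw [Finset.sum_congr rfl (fun k hk => by
      rw [Function.update_of_ne (by rintro rfl; exact hnot hk)])]
    ring
  have hmain : Tendsto (fun h : Euc N =>
      (f (x₀ + h) - f x₀ - ∑ k ∈ Finset.Icc 1 (n-1), P k h - Q h) / ‖h‖ ^ n)
      (𝓝[≠] (0 : Euc N)) (𝓝 0) := by
    rw [Metric.tendsto_nhds]
    intro ε hε
    filter_upwards [hsub2 (ε/2) (by linarith), hsup2 (ε/2) (by linarith)] with h h1 h2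
    rw [Real.dist_eq, sub_zero]
    have habs : |(f (x₀ + h) - f x₀ - ∑ k ∈ Finset.Icc 1 (n-1), P k h - Q h) / ‖h‖ ^ n|
        ≤ ε/2 := abs_le.mpr ⟨h1, h2⟩
    linarith
  have hTQ : Tendsto (fun h : Euc N =>
      ‖f (x₀ + h) - f x₀ - ∑ k ∈ Finset.Icc 1 n, Function.update P n Q k h‖ / ‖h‖ ^ n)
      (𝓝[≠] (0 : Euc N)) (𝓝 0) := by
    have habs := hmain.abs
    rw [abs_zero] at habs
    refine habs.congr fun h => ?_
    rw [hsum Q h, sub_add_eq_sub_sub, Real.norm_eq_abs, abs_div, abs_pow, abs_norm]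
  have hhom : ∀ k ∈ Finset.Icc 1 n, IsHomogPoly k (Function.update P n Q k) := by
    intro k hk
    rcases eq_or_ne k n with rfl | hkn
    · rwa [Function.update_self]
    · rw [Function.update_of_ne hkn]
      apply hPhom
      simp only [Finset.mem_Icc] at hk ⊢
      omega
  refine ⟨⟨hhom, hTQ⟩, ?_⟩
  intro Q' hQ'hom hT'
  have hTQ' := hT'.2
  have hdiff : Tendsto (fun h : Euc N => ‖Q h - Q' h‖ / ‖h‖ ^ n)
      (𝓝[≠] (0 : Euc N)) (𝓝 0) := by
    have hadd := hTQ.add hTQ'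
    rw [add_zero] at hadd
    refine squeeze_zero (fun h => by positivity) (fun h => ?_) hadd
    rw [← add_div]
    rcases eq_or_ne h 0 with rfl | hh
    · simp [zero_pow (by omega : n ≠ 0)]
    · have hc : (0:ℝ) < ‖h‖ ^ n := pow_pos (norm_pos_iff.mpr hh) n
      have key : Q h - Q' h =
          (f (x₀ + h) - f x₀ - ∑ k ∈ Finset.Icc 1 n, Function.update P n Q' k h) -
          (f (x₀ + h) - f x₀ - ∑ k ∈ Finset.Icc 1 n, Function.update P n Q k h) := by
        rw [hsum Q h, hsum Q' h]; ring
      gcongr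
      rw [key]
      exact (norm_sub_le _ _).trans (le_of_eq (add_comm _ _))
  funext v
  rcases eq_or_ne v 0 with rfl | hv
  · obtain ⟨M, hM⟩ := hQhom
    obtain ⟨M', hM'⟩ := hQ'hom
    rw [hM, hM', M.map_coord_zero (⟨0, by omega⟩ : Fin n) rfl,
      M'.map_coord_zero (⟨0, by omega⟩ : Fin n) rfl]
  · have hpath : Tendsto (fun t : ℝ => t • v) (𝓝[>] (0:ℝ)) (𝓝[≠] (0 : Euc N)) := by
      apply tendsto_nhdsWithin_of_tendsto_nhds_of_eventually_within
      · have hc : Continuous (fun t : ℝ => t • v) := continuous_id.smul continuous_const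
        have := hc.tendsto 0
        simp only [zero_smul] at this
        exact this.mono_left nhdsWithin_le_nhds
      · filter_upwards [self_mem_nhdsWithin] with t ht
        exact smul_ne_zero (ne_of_gt ht) hv
    have hconst := hdiff.comp hpath
    obtain ⟨M, hM⟩ := hQhom
    obtain ⟨M', hM'⟩ := hQ'hom
    have heq : ∀ᶠ t in 𝓝[>] (0:ℝ),
        (fun h : Euc N => ‖Q h - Q' h‖ / ‖h‖ ^ n) ((fun t : ℝ => t • v) t)
        = ‖Q v - Q' v‖ / ‖v‖ ^ n := by
      filter_upwards [self_mem_nhdsWithin] with t ht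
      have hQs : Q (t • v) = t ^ n * Q v := by
        rw [hM, hM]
        have := M.map_smul_univ (fun _ : Fin n => t) (fun _ : Fin n => v)
        simpa [smul_eq_mul] using this
      have hQ's : Q' (t • v) = t ^ n * Q' v := by
        rw [hM', hM']
        have := M'.map_smul_univ (fun _ : Fin n => t) (fun _ : Fin n => v)
        simpa [smul_eq_mul] using this
      simp only [hQs, hQ's]
      rw [show t ^ n * Q v - t ^ n * Q' v = t ^ n * (Q v - Q' v) by ring]
      rw [Real.norm_eq_abs, abs_mul, abs_pow, abs_of_pos ht, norm_smul,
        Real.norm_of_nonneg (show (0:ℝ) < t from ht).le, mul_pow,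
        mul_div_mul_left _ _ (pow_ne_zero n (ne_of_gt ht)), Real.norm_eq_abs]
    have hz := tendsto_nhds_unique (hconst.congr' heq) tendsto_const_nhds
    have hvn : ‖v‖ ^ n ≠ 0 := pow_ne_zero n (norm_ne_zero_iff.mpr hv)
    have h0 : ‖Q v - Q' v‖ = 0 := by
      rcases div_eq_zero_iff.mp hz.symm with h | h
      · exact h
      · exact absurd h hvn
    linarith [sub_eq_zero.mp (norm_eq_zero.mp h0)]
end
end

section
/- Define the function f₁ : ℝ → ℝ by f₁(x) = −x² for x ≤ 0 and f₁(x) = −x² + x³ for x > 0. Then Df₁(0) = 0, the second-order Taylor term at 0 is P²(h) = −h², and a 3-homogeneous polynomial T(h) = a h³ belongs to ∂³ f₁(0) if and only if a ∈ [0,1]. -/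
open Filter Topology

noncomputable section

/-- The function `f₁(x) = -x²` for `x ≤ 0`, `f₁(x) = -x² + x³` for `x > 0`. -/
def f1 (x : ℝ) : ℝ := if x ≤ 0 then -x ^ 2 else -x ^ 2 + x ^ 3

lemma f1_key (h : ℝ) : f1 h - f1 0 - (-(h ^ 2)) = if h ≤ 0 then 0 else h ^ 3 := by
  simp only [f1]
  split_ifs with h1 <;> norm_num

lemma f1_slope_bound (h : ℝ) : |slope f1 0 h| ≤ |h| + h ^ 2 := by
  have hf0 : f1 0 = 0 := by norm_num [f1]
  rcases eq_or_ne h 0 with rfl | hh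
  · simp [slope]
  · rw [slope_def_field, hf0]
    simp only [f1]
    split_ifs with h1
    · have : (-h ^ 2 - 0) / (h - 0) = -h := by field_simp; ring
      rw [this, abs_neg]
      nlinarith [sq_nonneg h]
    · push_neg at h1
      have : (-h ^ 2 + h ^ 3 - 0) / (h - 0) = -h + h ^ 2 := by field_simp; ring
      rw [this]
      calc |-h + h ^ 2| ≤ |-h| + |h ^ 2| := abs_add_le _ _
        _ = |h| + h ^ 2 := by rw [abs_neg, abs_of_nonneg (sq_nonneg h)]

lemma f1_quot2 (h : ℝ) : |(f1 h - f1 0 - (-(h ^ 2))) / |h| ^ 2| ≤ |h| := by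
  rw [f1_key]
  split_ifs with h1
  · simp
  · push_neg at h1
    rw [abs_of_pos h1]
    have : h ^ 3 / h ^ 2 = h := by
      field_simp
    rw [this, abs_of_pos h1]

lemma f1_quot3 (a h : ℝ) (hh : h ≠ 0) :
    (f1 h - f1 0 - (-(h ^ 2)) - a * h ^ 3) / |h| ^ 3 = if h ≤ 0 then a else 1 - a := by
  rw [f1_key]
  split_ifs with h1
  · have hneg : h < 0 := lt_of_le_of_ne h1 hh
    rw [abs_of_neg hneg]
    rw [show (0 - a * h ^ 3) = a * (-h) ^ 3 by ring]
    rw [mul_div_assoc, div_self (pow_ne_zero 3 (neg_ne_zero.mpr hh)), mul_one]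
  · push_neg at h1
    rw [abs_of_pos h1]
    rw [show (h ^ 3 - a * h ^ 3) = (1 - a) * h ^ 3 by ring]
    rw [mul_div_assoc, div_self (pow_ne_zero 3 hh), mul_one]

/-- `Df₁(0) = 0`, the second-order Taylor part of `f₁` at `0` is `P²(h) = -h²`, and
`T(h) = a h³` belongs to `∂³ f₁(0)` iff `a ∈ [0,1]`. -/
theorem f1_derivative_taylor_and_subdiff :
    HasDerivAt f1 0 0 ∧
    Tendsto (fun h : ℝ => (f1 h - f1 0 - (-(h ^ 2))) / |h| ^ 2) (𝓝[≠] (0 : ℝ)) (𝓝 0) ∧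
    ∀ a : ℝ,
      (∀ ε > (0 : ℝ), ∀ᶠ h in 𝓝[≠] (0 : ℝ),
        -ε ≤ (f1 h - f1 0 - (-(h ^ 2)) - a * h ^ 3) / |h| ^ 3) ↔ a ∈ Set.Icc (0 : ℝ) 1 := by
  refine ⟨?_, ?_, ?_⟩
  · rw [hasDerivAt_iff_tendsto_slope]
    apply squeeze_zero_norm f1_slope_bound
    have : Tendsto (fun h : ℝ => |h| + h ^ 2) (𝓝 0) (𝓝 0) := by
      have h1 : Tendsto (fun h : ℝ => |h|) (𝓝 0) (𝓝 |0|) := continuous_abs.tendsto 0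
      have h2 : Tendsto (fun h : ℝ => h ^ 2) (𝓝 0) (𝓝 (0 ^ 2)) := (continuous_pow 2).tendsto 0
      simpa using h1.add h2
    exact this.mono_left nhdsWithin_le_nhds
  · apply squeeze_zero_norm f1_quot2
    have : Tendsto (fun h : ℝ => |h|) (𝓝 0) (𝓝 0) := by
      simpa using continuous_abs.tendsto (0:ℝ)
    exact this.mono_left nhdsWithin_le_nhds
  · intro a
    constructor
    · intro hcond
      constructor
      · by_contra hlt
        push_neg at hlt
        have hε : (0:ℝ) < -a / 2 := by linarith
        have := hcond (-a/2) hε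
        have hmono : 𝓝[Set.Iio (0:ℝ)] 0 ≤ 𝓝[≠] (0:ℝ) :=
          nhdsWithin_mono 0 (fun x hx => ne_of_lt hx)
        have h2 : ∀ᶠ h in 𝓝[Set.Iio (0:ℝ)] 0,
            -(-a/2) ≤ (f1 h - f1 0 - (-(h ^ 2)) - a * h ^ 3) / |h| ^ 3 :=
          this.filter_mono hmono
        obtain ⟨h, hP, hneg⟩ := (h2.and self_mem_nhdsWithin).exists
        rw [f1_quot3 a h (ne_of_lt hneg), if_pos (le_of_lt hneg)] at hP
        linarith
      · by_contra hlt
        push_neg at hlt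
        have hε : (0:ℝ) < (a - 1) / 2 := by linarith
        have := hcond ((a-1)/2) hε
        have hmono : 𝓝[Set.Ioi (0:ℝ)] 0 ≤ 𝓝[≠] (0:ℝ) :=
          nhdsWithin_mono 0 (fun x hx => (ne_of_gt hx))
        have h2 : ∀ᶠ h in 𝓝[Set.Ioi (0:ℝ)] 0,
            -((a-1)/2) ≤ (f1 h - f1 0 - (-(h ^ 2)) - a * h ^ 3) / |h| ^ 3 :=
          this.filter_mono hmono
        obtain ⟨h, hP, hpos⟩ := (h2.and self_mem_nhdsWithin).exists
        rw [f1_quot3 a h (ne_of_gt hpos), if_neg (not_le.mpr hpos)] at hP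
        linarith
    · rintro ⟨h0, h1⟩ ε hε
      filter_upwards [self_mem_nhdsWithin] with h hh
      rw [f1_quot3 a h hh]
      split_ifs <;> linarith
end
end

section
/- Let f : ℝ → ℝ be lower semicontinuous and let C_f = {x ∈ ℝ : 0 ∈ ∂f(x)}, where 0 ∈ ∂f(x) means liminf_{t→0} (f(x+t) − f(x))/|t| ≥ 0. Then the image f(C_f) has Lebesgue measure zero in ℝ. -/
open Filter Topology MeasureTheory Set ENNReal

/-- The set of approximate local minima at scale `(ε, δ)`. -/
def Aset (f : ℝ → ℝ) (ε δ : ℝ) : Set ℝ :=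
  {x | ∀ t : ℝ, |t| ≤ δ → f x - ε * |t| ≤ f (x + t)}

lemma Aset_mono (f : ℝ → ℝ) (ε : ℝ) {δ δ' : ℝ} (h : δ' ≤ δ) :
    Aset f ε δ ⊆ Aset f ε δ' := fun _x hx t ht => hx t (ht.trans h)

/-- On a piece of `Aset f ε δ` of diameter at most `δ`, the image of `f` has
small extended diameter. -/
lemma diam_image_piece (f : ℝ → ℝ) {ε δ : ℝ} (hε : 0 ≤ ε) (hδ : 0 ≤ δ) (c : ℝ) :
    EMetric.diam (f '' (Aset f ε δ ∩ Icc c (c + δ))) ≤ ENNReal.ofReal (ε * δ) := by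
  apply EMetric.diam_le
  rintro u ⟨x, ⟨hxA, hxI⟩, rfl⟩ v ⟨y, ⟨hyA, hyI⟩, rfl⟩
  obtain ⟨hx1, hx2⟩ := hxI
  obtain ⟨hy1, hy2⟩ := hyI
  have hxy : |x - y| ≤ δ := by
    rw [abs_sub_le_iff]; constructor <;> linarith
  have hyx : |y - x| ≤ δ := by rwa [abs_sub_comm]
  have h1 := hyA (x - y) hxy
  have h2 := hxA (y - x) hyx
  rw [show y + (x - y) = x by ring] at h1
  rw [show x + (y - x) = y by ring] at h2
  rw [abs_sub_comm] at hyx h2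
  rw [edist_dist, Real.dist_eq]
  apply ENNReal.ofReal_le_ofReal
  have hεxy : ε * |x - y| ≤ ε * δ := by
    exact mul_le_mul_of_nonneg_left hxy hε
  rw [abs_sub_le_iff]
  constructor <;> nlinarith [abs_nonneg (x - y), le_abs_self (x - y),
    neg_abs_le (x - y)]

/-- Volume of the image of `Aset f ε δ` inside a window `[a, b]`. -/
lemma est (f : ℝ → ℝ) {ε δ : ℝ} (hε : 0 < ε) (hδ : 0 < δ) {a b : ℝ} (hab : a ≤ b) :
    volume (f '' (Aset f ε δ ∩ Icc a b)) ≤ ENNReal.ofReal (ε * (b - a + 2 * δ)) := by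
  set n : ℕ := ⌈(b - a) / δ⌉₊ + 1 with hn
  have hcov : Icc a b ⊆ ⋃ j ∈ Finset.range n, Icc (a + j * δ) (a + (j + 1) * δ) := by
    intro x hx
    have hx0 : 0 ≤ (x - a) / δ := div_nonneg (by linarith [hx.1]) hδ.le
    refine Set.mem_iUnion₂.2 ⟨⌊(x - a) / δ⌋₊, ?_, ?_⟩
    · rw [Finset.mem_range, hn, Nat.lt_add_one_iff]
      exact (Nat.floor_le_floor (by gcongr <;> first | exact hδ.le | exact hx.2 | linarith [hx.2])).trans
        (Nat.floor_le_ceil _)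
    · have h1 : (⌊(x - a) / δ⌋₊ : ℝ) ≤ (x - a) / δ := Nat.floor_le hx0
      have h2 : (x - a) / δ < ⌊(x - a) / δ⌋₊ + 1 := Nat.lt_floor_add_one _
      rw [le_div_iff₀ hδ] at h1
      rw [div_lt_iff₀ hδ] at h2
      constructor <;> [linarith; nlinarith]
  have himg : f '' (Aset f ε δ ∩ Icc a b) ⊆
      ⋃ j ∈ Finset.range n, f '' (Aset f ε δ ∩ Icc (a + j * δ) (a + (j + 1) * δ)) := by
    rw [← Set.image_iUnion₂]
    apply Set.image_mono
    rintro x ⟨hxA, hxI⟩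
    obtain ⟨j, hj, hxj⟩ := Set.mem_iUnion₂.1 (hcov hxI)
    exact Set.mem_iUnion₂.2 ⟨j, hj, hxA, hxj⟩
  calc volume (f '' (Aset f ε δ ∩ Icc a b))
      ≤ ∑ j ∈ Finset.range n, volume (f '' (Aset f ε δ ∩ Icc (a + j * δ) (a + (j + 1) * δ))) :=
        (measure_mono himg).trans (measure_biUnion_finset_le _ _)
    _ ≤ ∑ j ∈ Finset.range n, ENNReal.ofReal (ε * δ) := by
        refine Finset.sum_le_sum fun j _ => ?_
        have hc : a + ((j : ℝ) + 1) * δ = (a + j * δ) + δ := by ring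
        rw [hc]
        exact (Real.volume_le_diam _).trans (diam_image_piece f hε.le hδ.le _)
    _ = (n : ℝ≥0∞) * ENNReal.ofReal (ε * δ) := by
        rw [Finset.sum_const, Finset.card_range, nsmul_eq_mul]
    _ ≤ ENNReal.ofReal (ε * (b - a + 2 * δ)) := by
        rw [← ENNReal.ofReal_natCast, ← ENNReal.ofReal_mul (by positivity)]
        apply ENNReal.ofReal_le_ofReal
        have hceil : ((⌈(b - a) / δ⌉₊ : ℝ)) < (b - a) / δ + 1 :=
          Nat.ceil_lt_add_one (div_nonneg (by linarith) hδ.le)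
        have hnr : (n : ℝ) < (b - a) / δ + 2 := by
          rw [hn]; push_cast; linarith
        have hdm : (b - a) / δ * δ = b - a := div_mul_cancel₀ _ hδ.ne'
        nlinarith [mul_pos hε hδ]

/-- Morse-Sard for the first-order subdifferential on the real line: for `f : ℝ → ℝ`
lower semicontinuous, the image of `C_f = {x : 0 ∈ ∂f(x)}` is Lebesgue-null, where
`0 ∈ ∂f(x)` means `liminf_{t→0} (f(x+t) − f(x))/|t| ≥ 0`. -/
theorem morse_sard_first_order (f : ℝ → ℝ) (hf : LowerSemicontinuous f) :
    volume (f '' {x : ℝ | ∀ ε > (0 : ℝ), ∀ᶠ t in 𝓝[≠] (0 : ℝ),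
      -ε ≤ (f (x + t) - f x) / |t|}) = 0 := by
  set S : Set ℝ := {x : ℝ | ∀ ε > (0 : ℝ), ∀ᶠ t in 𝓝[≠] (0 : ℝ),
      -ε ≤ (f (x + t) - f x) / |t|} with hS
  -- every point of S lies in some Aset f ε (1/(m+1))
  have hmem : ∀ x ∈ S, ∀ ε : ℝ, 0 < ε → ∃ m : ℕ, x ∈ Aset f ε (1 / ((m : ℝ) + 1)) := by
    intro x hx ε hε
    have h := hx ε hε
    rw [eventually_nhdsWithin_iff, Metric.eventually_nhds_iff] at h
    obtain ⟨δ, hδ, h⟩ := h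
    obtain ⟨m, hm⟩ := exists_nat_one_div_lt hδ
    refine ⟨m, fun t ht => ?_⟩
    rcases eq_or_ne t 0 with rfl | ht0
    · simp
    · have hdist : dist t 0 < δ := by
        rw [Real.dist_eq, sub_zero]; exact lt_of_le_of_lt ht hm
      have := h hdist ht0
      have habs : 0 < |t| := abs_pos.2 ht0
      rw [le_div_iff₀ habs] at this
      linarith
  -- image over each bounded window is null
  have key : ∀ N : ℕ, volume (f '' (S ∩ Icc (-(N : ℝ)) N)) = 0 := by
    intro N
    have step : ∀ k : ℕ, volume (f '' (S ∩ Icc (-(N : ℝ)) N)) ≤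
        ENNReal.ofReal (1 / ((k : ℝ) + 1) * (2 * N + 2)) := by
      intro k
      set ε : ℝ := 1 / ((k : ℝ) + 1) with hε
      have hεpos : 0 < ε := by positivity
      have hsub : S ∩ Icc (-(N : ℝ)) N ⊆
          ⋃ m : ℕ, (Aset f ε (1 / ((m : ℝ) + 1)) ∩ Icc (-(N : ℝ)) N) := by
        rintro x ⟨hxS, hxI⟩
        obtain ⟨m, hm⟩ := hmem x hxS ε hεpos
        exact Set.mem_iUnion.2 ⟨m, hm, hxI⟩
      have hdir : Directed (· ⊆ ·)
          (fun m : ℕ => f '' (Aset f ε (1 / ((m : ℝ) + 1)) ∩ Icc (-(N : ℝ)) N)) := by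
        apply Monotone.directed_le
        intro m m' hmm'
        apply Set.image_mono
        apply Set.inter_subset_inter_left
        apply Aset_mono
        have : (m : ℝ) + 1 ≤ (m' : ℝ) + 1 := by exact_mod_cast by omega
        exact one_div_le_one_div_of_le (by positivity) this
      calc volume (f '' (S ∩ Icc (-(N : ℝ)) N))
          ≤ volume (⋃ m : ℕ, f '' (Aset f ε (1 / ((m : ℝ) + 1)) ∩ Icc (-(N : ℝ)) N)) := by
            apply measure_mono
            rw [← Set.image_iUnion]
            exact Set.image_mono hsub
        _ = ⨆ m : ℕ, volume (f '' (Aset f ε (1 / ((m : ℝ) + 1)) ∩ Icc (-(N : ℝ)) N)) :=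
            hdir.measure_iUnion
        _ ≤ ENNReal.ofReal (ε * (2 * N + 2)) := by
            refine iSup_le fun m => ?_
            have hδpos : (0 : ℝ) < 1 / ((m : ℝ) + 1) := by positivity
            refine (est f hεpos hδpos (neg_le_self (Nat.cast_nonneg N))).trans ?_
            apply ENNReal.ofReal_le_ofReal
            have h1 : 1 / ((m : ℝ) + 1) ≤ 1 := by
              rw [div_le_one (by positivity)]; linarith [Nat.cast_nonneg (α := ℝ) m]
            nlinarith
    have hlim : Tendsto (fun k : ℕ => ENNReal.ofReal (1 / ((k : ℝ) + 1) * (2 * N + 2)))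
        atTop (𝓝 0) := by
      rw [show (0 : ℝ≥0∞) = ENNReal.ofReal 0 by simp]
      apply ENNReal.tendsto_ofReal
      simpa using tendsto_one_div_add_atTop_nhds_zero_nat.mul_const (2 * (N : ℝ) + 2)
    exact le_antisymm (ge_of_tendsto' hlim step) (zero_le)
  have hcover : f '' S ⊆ ⋃ N : ℕ, f '' (S ∩ Icc (-(N : ℝ)) N) := by
    rintro _ ⟨x, hx, rfl⟩
    obtain ⟨N, hN⟩ := exists_nat_ge |x|
    have h := abs_le.1 hN
    exact Set.mem_iUnion.2 ⟨N, x, ⟨hx, h.1, h.2⟩, rfl⟩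
  refine le_antisymm ((measure_mono hcover).trans ?_) (zero_le)
  refine (measure_iUnion_le _).trans ?_
  simp [key]
end

section
/- Let f : ℝ² → ℝ be a lower semicontinuous function. Then the set f({x ∈ ℝ² : 0 ∈ ∂_P f(x)}) has one-dimensional Lebesgue measure zero, where ∂_P f(x) is the proximal subdifferential. -/
open Filter Topology MeasureTheory

open Metric Set ENNReal

local notation "E2" => EuclideanSpace ℝ (Fin 2)


/-- If a quantity is below `ofReal ε` for all positive `ε`, it vanishes. -/
lemma aux_eq_zero_of_forall {a : ℝ≥0∞} (h : ∀ ε : ℝ, 0 < ε → a ≤ ENNReal.ofReal ε) : a = 0 := by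
  refine le_antisymm ?_ zero_le
  refine ENNReal.le_of_forall_pos_le_add fun ε hε _ => ?_
  calc a ≤ ENNReal.ofReal ε := h ε (by exact_mod_cast hε)
    _ ≤ 0 + ε := by simp [ENNReal.ofReal_coe_nnreal]

/-- image of a set on which f has oscillation ≤ b is small. -/
lemma aux_image_le {f : E2 → ℝ} {S : Set E2} {b : ℝ}
    (h : ∀ x ∈ S, ∀ y ∈ S, |f x - f y| ≤ b) :
    volume (f '' S) ≤ ENNReal.ofReal (2 * b) := by
  rcases S.eq_empty_or_nonempty with rfl | ⟨x₀, hx₀⟩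
  · simp
  · have : f '' S ⊆ Icc (f x₀ - b) (f x₀ + b) := by
      rintro - ⟨y, hy, rfl⟩
      have := h y hy x₀ hx₀
      rw [abs_le] at this
      constructor <;> linarith [this.1, this.2]
    calc volume (f '' S) ≤ volume (Icc (f x₀ - b) (f x₀ + b)) := measure_mono this
      _ = ENNReal.ofReal (2 * b) := by rw [Real.volume_Icc]; ring_nf

lemma aux_vol_cb (x : E2) {r : ℝ} (hr : 0 ≤ r) :
    volume (closedBall x r) = ENNReal.ofReal (r ^ 2) * volume (closedBall (0:E2) 1) := by
  rw [Measure.addHaar_closedBall' volume x hr]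
  norm_num

/-- Image of a null set under a map with quadratic pinch is null. -/
lemma aux_image_null_of_null {f : E2 → ℝ} {S : Set E2} {K : ℝ} (hK : 0 ≤ K)
    (hp : ∀ x ∈ S, ∀ y ∈ S, |f x - f y| ≤ K * ‖x - y‖ ^ 2)
    (hS : volume S = 0) : volume (f '' S) = 0 := by
  set u0 := volume (closedBall (0:E2) 1) with hu0def
  have hu0 : u0 ≠ 0 := (measure_closedBall_pos volume _ one_pos).ne'
  have hu0' : u0 ≠ ⊤ := measure_closedBall_lt_top.ne
  apply aux_eq_zero_of_forall
  intro ε hε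
  set τ : ℝ≥0∞ := (ENNReal.ofReal ε * u0) / (ENNReal.ofReal (128*K) + 1) with hτdef
  have hτpos : 0 < τ := by
    apply ENNReal.div_pos
    · exact (mul_ne_zero (ENNReal.ofReal_pos.2 hε).ne' hu0)
    · exact ENNReal.add_ne_top.mpr ⟨ENNReal.ofReal_ne_top, one_ne_top⟩
  obtain ⟨U, hSU, hUopen, hUvol⟩ := Set.exists_isOpen_lt_of_lt S τ (hS ▸ hτpos)
  have hball : ∀ a : E2, a ∈ S → ∃ t : ℝ, 0 < t ∧ t ≤ 1 ∧ closedBall a t ⊆ U := by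
    intro a ha
    obtain ⟨ρ, hρpos, hρ⟩ := Metric.isOpen_iff.1 hUopen a (hSU ha)
    refine ⟨min (ρ/2) 1, by positivity, min_le_right _ _, ?_⟩
    refine subset_trans (closedBall_subset_ball ?_) hρ
    calc min (ρ/2) 1 ≤ ρ/2 := min_le_left _ _
      _ < ρ := by linarith
  choose! rf hr0 hr1 hrU using hball
  obtain ⟨u, hu_sub, hu_disj, hu_cov⟩ :=
    Vitali.exists_disjoint_subfamily_covering_enlargement_closedBall S id rf 1 hr1 4 (by norm_num)
  have hcnt : u.Countable := by
    apply hu_disj.countable_of_nonempty_interior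
    intro b hb
    exact ⟨b, ball_subset_interior_closedBall (mem_ball_self (hr0 b (hu_sub hb)))⟩
  have hcover : f '' S ⊆ ⋃ b ∈ u, f '' (S ∩ closedBall b (4 * rf b)) := by
    rintro - ⟨a, ha, rfl⟩
    obtain ⟨b, hbu, hb⟩ := hu_cov a ha
    exact mem_biUnion hbu ⟨a, ⟨ha, hb (mem_closedBall_self (hr0 a ha).le)⟩, rfl⟩
  have hterm : ∀ b ∈ u, volume (f '' (S ∩ closedBall b (4 * rf b)))
      ≤ ENNReal.ofReal (128 * K * (rf b)^2) := by
    intro b hb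
    have hrb : 0 < rf b := hr0 b (hu_sub hb)
    have : volume (f '' (S ∩ closedBall b (4 * rf b))) ≤ ENNReal.ofReal (2 * (K * (8 * rf b)^2)) := by
      apply aux_image_le
      intro x hx y hy
      refine (hp x hx.1 y hy.1).trans ?_
      have hd : ‖x - y‖ ≤ 8 * rf b := by
        rw [← dist_eq_norm]
        calc dist x y ≤ dist x b + dist y b := dist_triangle_right x y b
          _ ≤ 4 * rf b + 4 * rf b := add_le_add hx.2 hy.2
          _ = 8 * rf b := by ring
      have := mul_le_mul_of_nonneg_left (pow_le_pow_left₀ (norm_nonneg _) hd 2) hK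
      linarith
    refine this.trans (le_of_eq ?_)
    congr 1
    ring
  calc volume (f '' S) ≤ volume (⋃ b ∈ u, f '' (S ∩ closedBall b (4 * rf b))) :=
        measure_mono hcover
    _ ≤ ∑' b : u, volume (f '' (S ∩ closedBall (b:E2) (4 * rf b))) := measure_biUnion_le volume hcnt _
    _ ≤ ∑' b : u, ENNReal.ofReal (128 * K * (rf b)^2) :=
        ENNReal.tsum_le_tsum (fun b => hterm b b.2)
    _ ≤ ENNReal.ofReal ε := by
      rw [← ENNReal.mul_le_mul_iff_left hu0 hu0']
      rw [← ENNReal.tsum_mul_right]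
      have heach : ∀ b : u, ENNReal.ofReal (128 * K * (rf b)^2) * u0
          = ENNReal.ofReal (128 * K) * volume (closedBall (b:E2) (rf b)) := by
        intro b
        rw [aux_vol_cb _ (hr0 b (hu_sub b.2)).le, ← hu0def, ← mul_assoc,
          ← ENNReal.ofReal_mul (by positivity)]
      rw [tsum_congr heach, ENNReal.tsum_mul_left]
      have hsum : ∑' b : u, volume (closedBall (b:E2) (rf b)) ≤ volume U := by
        have hmb := measure_biUnion (μ := volume) hcnt hu_disj (fun b _ => measurableSet_closedBall)
        simp only [id] at hmb
        rw [← hmb]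
        exact measure_mono (iUnion₂_subset fun b hb => hrU b (hu_sub hb))
      calc ENNReal.ofReal (128*K) * ∑' b : u, volume (closedBall (b:E2) (rf b))
          ≤ ENNReal.ofReal (128*K) * τ := by
            exact mul_le_mul_right (hsum.trans hUvol.le) _
        _ ≤ (ENNReal.ofReal (128*K) + 1) * τ := mul_le_mul_left le_self_add _
        _ ≤ ENNReal.ofReal ε * u0 := by
            rw [hτdef]
            exact ENNReal.mul_div_le


set_option maxHeartbeats 1000000 in
/-- The chain estimate: on the set of points of `A` with uniformly high density
(at scales up to `1/(m+1)`), `f` is pinched with constant `9K/T` instead of `K`. -/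
lemma aux_chain {f : E2 → ℝ} {A : Set E2} {K : ℝ} (hK : 0 ≤ K)
    (hp : ∀ x ∈ A, ∀ y ∈ A, |f x - f y| ≤ K * ‖x - y‖ ^ 2)
    {T : ℕ} (hT : 1 ≤ T) {m : ℕ} {x y : E2}
    (hx : x ∈ A) (hy : y ∈ A)
    (hdx : ∀ r : ℝ, 0 < r → r ≤ 1/(m+1) →
      ENNReal.ofReal (1 - 1/(8*(T:ℝ)^2)) * volume (closedBall x r)
        ≤ volume (A ∩ closedBall x r))
    (hxy : dist x y ≤ 1/(3*((m:ℝ)+1))) :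
    |f x - f y| ≤ (9*K/T) * ‖x - y‖^2 := by
  rcases eq_or_ne x y with rfl | hne
  · simp only [sub_self, abs_zero]
    positivity
  have hTpos : (0:ℝ) < T := by exact_mod_cast hT
  have hT1 : (1:ℝ) ≤ T := by exact_mod_cast hT
  have hδ1 : 1/(8*(T:ℝ)^2) ≤ 1/8 := by
    apply one_div_le_one_div_of_le
    · norm_num
    · nlinarith
  have hδpos : (0:ℝ) < 1 - 1/(8*(T:ℝ)^2) := by linarith
  set ρ := dist x y with hρdef
  have hρ : 0 < ρ := dist_pos.2 hne
  set w : ℕ → E2 := fun i => x + (((i:ℝ))/(T:ℝ)) • (y - x) with hwdef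
  have hw0 : w 0 = x := by simp [hwdef]
  have hwT : w T = y := by
    simp only [hwdef, div_self hTpos.ne', one_smul]
    abel
  have hyx : ‖y - x‖ = ρ := by rw [hρdef, dist_eq_norm, norm_sub_rev]
  have hwdist : ∀ i, i ≤ T → dist (w i) x ≤ ρ := by
    intro i hi
    have h0 : dist (w i) x = ((i:ℝ)/T) * ‖y - x‖ := by
      simp [hwdef, dist_eq_norm, add_sub_cancel_left, norm_smul, abs_of_nonneg,
        div_nonneg (Nat.cast_nonneg i) hTpos.le]
    rw [h0, hyx]
    have h1 : ((i:ℝ))/T ≤ 1 := by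
      rw [div_le_one hTpos]
      exact_mod_cast hi
    have h2 : (0:ℝ) ≤ ((i:ℝ))/T := div_nonneg (Nat.cast_nonneg i) hTpos.le
    nlinarith
  have hwstep : ∀ i : ℕ, dist (w (i+1)) (w i) ≤ ρ/T := by
    intro i
    have : w (i+1) - w i = ((1:ℝ)/T) • (y - x) := by
      simp only [hwdef]
      rw [add_sub_add_left_eq_sub, ← sub_smul]
      congr 1
      push_cast
      field_simp
      ring
    rw [dist_eq_norm, this, norm_smul, hyx]
    simp only [norm_div, norm_one, Real.norm_natCast]
    exact le_of_eq (by ring)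
  -- nonemptiness of A near each w i
  have hne2 : ∀ i, i ≤ T → (A ∩ closedBall (w i) (ρ/T)).Nonempty := by
    intro i hi
    have h2ρ : 2*ρ ≤ 1/((m:ℝ)+1) := by
      have hm : (0:ℝ) < (m:ℝ)+1 := by positivity
      have h3 : (0:ℝ) < 3*((m:ℝ)+1) := by positivity
      rw [le_div_iff₀ h3] at hxy
      rw [le_div_iff₀ hm]
      nlinarith
    have hbB : closedBall (w i) (ρ/T) ⊆ closedBall x (2*ρ) := by
      intro z hz
      simp only [mem_closedBall] at hz ⊢
      have h1 : ρ/T ≤ ρ := by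
        rw [div_le_iff₀ hTpos]
        have hT1 : (1:ℝ) ≤ T := by exact_mod_cast hT
        nlinarith
      calc dist z x ≤ dist z (w i) + dist (w i) x := dist_triangle _ _ _
        _ ≤ ρ/T + ρ := add_le_add hz (hwdist i hi)
        _ ≤ 2*ρ := by linarith
    rcases eq_or_ne (volume (A ∩ closedBall (w i) (ρ/T))) 0 with hz | hz
    · exfalso
      set u0 := volume (closedBall (0:E2) 1) with hu0def
      have hu0 : u0 ≠ 0 := (measure_closedBall_pos volume _ one_pos).ne'
      have hu0' : u0 ≠ ⊤ := measure_closedBall_lt_top.ne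
      have dens := hdx (2*ρ) (by positivity) h2ρ
      have hsub : A ∩ closedBall x (2*ρ) ⊆
          (A ∩ closedBall (w i) (ρ/T)) ∪ (closedBall x (2*ρ) \ closedBall (w i) (ρ/T)) := by
        intro z hz2
        by_cases hzb : z ∈ closedBall (w i) (ρ/T)
        · exact Or.inl ⟨hz2.1, hzb⟩
        · exact Or.inr ⟨hz2.2, hzb⟩
      have hsplit : volume (closedBall (w i) (ρ/T)) + volume (closedBall x (2*ρ) \ closedBall (w i) (ρ/T))
          = volume (closedBall x (2*ρ)) := by
        have := measure_inter_add_diff (μ := volume) (closedBall x (2*ρ))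
          (measurableSet_closedBall (x := w i) (ε := ρ/T))
        rwa [inter_eq_self_of_subset_right hbB] at this
      have hchain : ENNReal.ofReal (1 - 1/(8*(T:ℝ)^2)) * volume (closedBall x (2*ρ))
            + volume (closedBall (w i) (ρ/T)) ≤ volume (closedBall x (2*ρ)) := by
        calc ENNReal.ofReal (1 - 1/(8*(T:ℝ)^2)) * volume (closedBall x (2*ρ))
              + volume (closedBall (w i) (ρ/T))
            ≤ volume (A ∩ closedBall x (2*ρ)) + volume (closedBall (w i) (ρ/T)) := by
              exact add_le_add_left dens _
          _ ≤ (volume (A ∩ closedBall (w i) (ρ/T))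
                + volume (closedBall x (2*ρ) \ closedBall (w i) (ρ/T)))
                + volume (closedBall (w i) (ρ/T)) := by
              refine add_le_add_left ((measure_mono hsub).trans (measure_union_le _ _)) _
          _ = volume (closedBall x (2*ρ)) := by
              rw [hz, zero_add, add_comm, hsplit]
      rw [aux_vol_cb x (by positivity : (0:ℝ) ≤ 2*ρ), aux_vol_cb (w i) (by positivity : (0:ℝ) ≤ ρ/T),
        ← hu0def, ← mul_assoc, ← ENNReal.ofReal_mul hδpos.le,
        ← add_mul, ← ENNReal.ofReal_add (mul_nonneg hδpos.le (sq_nonneg _)) (by positivity)] at hchain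
      rw [ENNReal.mul_le_mul_iff_left hu0 hu0'] at hchain
      rw [ENNReal.ofReal_le_ofReal_iff (by positivity)] at hchain
      have hT2 : (0:ℝ) < (T:ℝ)^2 := by positivity
      rw [div_pow] at hchain
      have e : (1 - 1/(8*(T:ℝ)^2)) * (2*ρ)^2
          = (2*ρ)^2 - (1/(8*(T:ℝ)^2))*(2*ρ)^2 := by ring
      rw [e] at hchain
      have hkey : ρ^2/(T:ℝ)^2 ≤ (1/(8*(T:ℝ)^2)) * (2*ρ)^2 := by linarith
      rw [div_le_iff₀ hT2] at hkey
      have e2 : (1/(8*(T:ℝ)^2))*(2*ρ)^2*(T:ℝ)^2 = ρ^2/2 := by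
        field_simp
        ring
      rw [e2] at hkey
      nlinarith
    · exact nonempty_of_measure_ne_zero hz
  -- choose the chain points
  have hzc : ∀ i : ℕ, ∃ p : E2, (i ≤ T → p ∈ A ∧ dist p (w i) ≤ ρ/T) := by
    intro i
    by_cases hi : i ≤ T
    · obtain ⟨p, hp1, hp2⟩ := hne2 i hi
      exact ⟨p, fun _ => ⟨hp1, by simpa [mem_closedBall] using hp2⟩⟩
    · exact ⟨x, fun h => absurd h hi⟩
  choose z0 hz0 using hzc
  set z : ℕ → E2 := fun i => if i = 0 then x else if i = T then y else z0 i with hzdef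
  have hzA : ∀ i, i ≤ T → z i ∈ A ∧ dist (z i) (w i) ≤ ρ/T := by
    intro i hi
    rcases eq_or_ne i 0 with rfl | h0
    · simp only [hzdef, if_pos rfl]
      exact ⟨hx, by rw [hw0, dist_self]; positivity⟩
    rcases eq_or_ne i T with rfl | hiT
    · have hzi : z i = y := by
        simp only [hzdef, if_neg h0]
        simp
      rw [hzi, hwT, dist_self]
      exact ⟨hy, by positivity⟩
    · simp only [hzdef, if_neg h0, if_neg hiT]
      exact hz0 i hi
  have hstep : ∀ i, i < T → |f (z (i+1)) - f (z i)| ≤ K * (3*ρ/T)^2 := by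
    intro i hi
    have h1 := hzA i (le_of_lt hi)
    have h2 := hzA (i+1) hi
    refine (hp _ h2.1 _ h1.1).trans ?_
    have hd : ‖z (i+1) - z i‖ ≤ 3*ρ/T := by
      rw [← dist_eq_norm]
      calc dist (z (i+1)) (z i)
          ≤ dist (z (i+1)) (w (i+1)) + dist (w (i+1)) (w i) + dist (w i) (z i) :=
            dist_triangle4 _ _ _ _
        _ ≤ ρ/T + ρ/T + ρ/T := by
            refine add_le_add (add_le_add h2.2 (hwstep i)) ?_
            rw [dist_comm]
            exact h1.2
        _ = 3*ρ/T := by ring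
    have := mul_le_mul_of_nonneg_left (pow_le_pow_left₀ (norm_nonneg _) hd 2) hK
    linarith
  have htel : f (z T) - f (z 0) = ∑ i ∈ Finset.range T, (f (z (i+1)) - f (z i)) :=
    (Finset.sum_range_sub (fun i => f (z i)) T).symm
  have hz0x : z 0 = x := by simp [hzdef]
  have hzTy : z T = y := by
    simp only [hzdef]
    rw [if_neg (by omega : T ≠ 0)]
    simp
  have hsum : |f y - f x| ≤ T * (K * (3*ρ/T)^2) := by
    rw [← hz0x, ← hzTy, htel]
    calc |∑ i ∈ Finset.range T, (f (z (i+1)) - f (z i))|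
        ≤ ∑ i ∈ Finset.range T, |f (z (i+1)) - f (z i)| := Finset.abs_sum_le_sum_abs _ _
      _ ≤ ∑ _i ∈ Finset.range T, K * (3*ρ/T)^2 :=
          Finset.sum_le_sum (fun i hi => hstep i (Finset.mem_range.1 hi))
      _ = T * (K * (3*ρ/T)^2) := by
          rw [Finset.sum_const, Finset.card_range, nsmul_eq_mul]
  rw [abs_sub_comm] at hsum
  refine hsum.trans (le_of_eq ?_)
  have : ρ = ‖x - y‖ := by rw [hρdef, dist_eq_norm]
  rw [← this]
  field_simp
  ring


lemma aux_coord_le (v : E2) (k : Fin 2) : |v k| ≤ ‖v‖ := by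
  rw [EuclideanSpace.norm_eq, ← Real.sqrt_sq_eq_abs]
  apply Real.sqrt_le_sqrt
  simp only [Real.norm_eq_abs, sq_abs]
  exact Finset.single_le_sum (f := fun i => v i ^ 2) (fun i _ => sq_nonneg _) (Finset.mem_univ k)

lemma aux_norm_sq_le {v : E2} {η : ℝ} (h : ∀ k : Fin 2, |v k| ≤ η) : ‖v‖^2 ≤ 2*η^2 := by
  rw [EuclideanSpace.norm_eq, Real.sq_sqrt (by positivity)]
  simp only [Real.norm_eq_abs, sq_abs]
  have : ∀ k : Fin 2, v k ^ 2 ≤ η ^ 2 := by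
    intro k
    have h1 := h k
    nlinarith [abs_nonneg (v k), sq_abs (v k)]
  calc ∑ i : Fin 2, v i ^ 2 ≤ ∑ _i : Fin 2, η ^ 2 :=
        Finset.sum_le_sum (fun i _ => this i)
    _ = 2*η^2 := by simp [Finset.sum_const]

set_option maxHeartbeats 1600000 in
/-- Covering a bounded set by a controlled number of small grid cells. -/
lemma aux_grid {f : E2 → ℝ} {A' : Set E2} {c κ η R : ℝ} (hκ : 0 ≤ κ) (hη : 0 < η)
    (hc : 0 ≤ c) (h2 : 2*η^2 ≤ c^2) (ctr : E2) (hR : 0 ≤ R)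
    (hA : A' ⊆ closedBall ctr R)
    (hp : ∀ x ∈ A', ∀ y ∈ A', dist x y ≤ c → |f x - f y| ≤ κ * ‖x - y‖^2) :
    volume (f '' A') ≤ ENNReal.ofReal ((2*R/η + 2)^2 * (4*κ*η^2)) := by
  set a : Fin 2 → ℝ := fun k => ctr k - R with hadef
  set N : ℕ := ⌈2*R/η⌉₊ + 1 with hNdef
  set cell : ℕ × ℕ → Set E2 := fun p =>
    {v | (a 0 + p.1*η ≤ v 0 ∧ v 0 < a 0 + (p.1+1)*η) ∧
         (a 1 + p.2*η ≤ v 1 ∧ v 1 < a 1 + (p.2+1)*η)} with hcelldef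
  set box : Finset (ℕ × ℕ) := Finset.range N ×ˢ Finset.range N with hboxdef
  -- the cover
  have hcover : A' ⊆ ⋃ p ∈ box, cell p := by
    intro v hv
    have hco : ∀ k : Fin 2, 0 ≤ v k - a k ∧ v k - a k ≤ 2*R := by
      intro k
      have h1 : |v k - ctr k| ≤ R := by
        have h2' := aux_coord_le (v - ctr) k
        have h3 : (v - ctr) k = v k - ctr k := rfl
        rw [h3] at h2'
        refine h2'.trans ?_
        rw [← dist_eq_norm]
        exact hA hv
      rw [abs_le] at h1
      constructor <;> simp only [hadef] <;> linarith [h1.1, h1.2]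
    have hfl : ∀ k : Fin 2, ⌊(v k - a k)/η⌋₊ < N ∧
        a k + (⌊(v k - a k)/η⌋₊ : ℝ)*η ≤ v k ∧
        v k < a k + ((⌊(v k - a k)/η⌋₊ : ℝ)+1)*η := by
      intro k
      set q := (v k - a k)/η with hq
      have hq0 : 0 ≤ q := div_nonneg (hco k).1 hη.le
      have hqmul : q * η = v k - a k := div_mul_cancel₀ _ hη.ne'
      have hqle : q ≤ 2*R/η := by
        rw [hq, div_le_div_iff₀ hη hη]
        nlinarith [(hco k).2]
      refine ⟨?_, ?_, ?_⟩
      · have := (Nat.floor_le_floor hqle).trans (Nat.floor_le_ceil (2*R/η))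
        omega
      · have h1 : (⌊q⌋₊ : ℝ) ≤ q := Nat.floor_le hq0
        have := mul_le_mul_of_nonneg_right h1 hη.le
        rw [hqmul] at this
        linarith
      · have h1 : q < (⌊q⌋₊ : ℝ) + 1 := Nat.lt_floor_add_one q
        have := mul_lt_mul_of_pos_right h1 hη
        rw [hqmul] at this
        linarith
    refine mem_biUnion (?_ : (⌊(v 0 - a 0)/η⌋₊, ⌊(v 1 - a 1)/η⌋₊) ∈ box) ?_
    · simp only [hboxdef, Finset.mem_product, Finset.mem_range]
      exact ⟨(hfl 0).1, (hfl 1).1⟩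
    · exact ⟨⟨(hfl 0).2.1, (hfl 0).2.2⟩, ⟨(hfl 1).2.1, (hfl 1).2.2⟩⟩
  -- per-cell bound
  have hcell : ∀ p : ℕ × ℕ, volume (f '' (A' ∩ cell p)) ≤ ENNReal.ofReal (2*(κ*(2*η^2))) := by
    intro p
    apply aux_image_le
    intro x hx y hy
    have hx2 := hx.2
    have hy2 := hy.2
    simp only [hcelldef, mem_setOf_eq] at hx2 hy2
    have hco0 : |x 0 - y 0| ≤ η := by
      rw [abs_le]
      constructor
      · nlinarith [hx2.1.1, hy2.1.2]
      · nlinarith [hx2.1.2, hy2.1.1]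
    have hco1 : |x 1 - y 1| ≤ η := by
      rw [abs_le]
      constructor
      · nlinarith [hx2.2.1, hy2.2.2]
      · nlinarith [hx2.2.2, hy2.2.1]
    have hco : ∀ k : Fin 2, |x k - y k| ≤ η := by
      intro k
      fin_cases k
      · exact hco0
      · exact hco1
    have hns : ‖x - y‖^2 ≤ 2*η^2 := by
      apply aux_norm_sq_le
      intro k
      exact hco k
    have hdxy : dist x y ≤ c := by
      rw [dist_eq_norm]
      nlinarith [norm_nonneg (x - y)]
    refine (hp x hx.1 y hy.1 hdxy).trans ?_
    nlinarith
  -- assemble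
  have hNle : (N:ℝ) ≤ 2*R/η + 2 := by
    have h1 : ((⌈2*R/η⌉₊ : ℝ)) < 2*R/η + 1 := Nat.ceil_lt_add_one (by positivity)
    simp only [hNdef]
    push_cast
    linarith
  calc volume (f '' A')
      ≤ volume (⋃ p ∈ box, f '' (A' ∩ cell p)) := by
        apply measure_mono
        rintro - ⟨v, hv, rfl⟩
        obtain ⟨p, hp1, hp2⟩ := mem_iUnion₂.1 (hcover hv)
        exact mem_biUnion hp1 ⟨v, ⟨hv, hp2⟩, rfl⟩
    _ ≤ ∑ p ∈ box, volume (f '' (A' ∩ cell p)) := measure_biUnion_finset_le _ _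
    _ ≤ box.card • ENNReal.ofReal (2*(κ*(2*η^2))) :=
        Finset.sum_le_card_nsmul _ _ _ (fun p _ => hcell p)
    _ ≤ ENNReal.ofReal ((2*R/η + 2)^2 * (4*κ*η^2)) := by
        rw [nsmul_eq_mul]
        have hcard : box.card = N*N := by
          simp [hboxdef]
        rw [hcard]
        have : ((N*N : ℕ) : ℝ≥0∞) = ENNReal.ofReal ((N:ℝ)*(N:ℝ)) := by
          rw [← ENNReal.ofReal_natCast]
          push_cast
          ring_nf
        rw [this, ← ENNReal.ofReal_mul (by positivity)]
        apply ENNReal.ofReal_le_ofReal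
        have hNN : (N:ℝ)*(N:ℝ) ≤ (2*R/η + 2)^2 := by
          have h0 : (0:ℝ) ≤ N := Nat.cast_nonneg N
          nlinarith
        have hb : (0:ℝ) ≤ 2*(κ*(2*η^2)) := by positivity
        nlinarith [hNN, hb, mul_le_mul_of_nonneg_right hNN hb]

set_option maxHeartbeats 1600000 in
/-- Main covering lemma: the image of a bounded set with a quadratic pinch is null. -/
lemma aux_main {f : E2 → ℝ} {A : Set E2} {K R : ℝ} (hK : 0 ≤ K) (ctr : E2) (hR : 0 ≤ R)
    (hA : A ⊆ closedBall ctr R)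
    (hp : ∀ x ∈ A, ∀ y ∈ A, |f x - f y| ≤ K * ‖x - y‖^2) :
    volume (f '' A) = 0 := by
  apply aux_eq_zero_of_forall
  intro ε hε
  set C : ℝ := (2*R+2)^2*(36*K) with hCdef
  have hC0 : 0 ≤ C := by positivity
  set T : ℕ := max 1 (⌈C/ε⌉₊ + 1) with hTdef
  have hT : 1 ≤ T := le_max_left _ _
  have hTpos : (0:ℝ) < T := by exact_mod_cast hT
  have hCT : C/(T:ℝ) ≤ ε := by
    have h1 : C/ε ≤ (⌈C/ε⌉₊ : ℝ) := Nat.le_ceil _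
    have h2 : ((⌈C/ε⌉₊ + 1 : ℕ) : ℝ) ≤ (T:ℝ) := by
      exact_mod_cast le_max_right 1 (⌈C/ε⌉₊ + 1)
    push_cast at h2
    rw [div_le_iff₀ hTpos]
    have h3 : C/ε ≤ (T:ℝ) := by linarith
    rw [div_le_iff₀ hε] at h3
    linarith
  set D : ℕ → Set (EuclideanSpace ℝ (Fin 2)) := fun m =>
    {x | x ∈ A ∧ ∀ r : ℝ, 0 < r → r ≤ 1/((m:ℝ)+1) →
      ENNReal.ofReal (1 - 1/(8*(T:ℝ)^2)) * volume (closedBall x r)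
        ≤ volume (A ∩ closedBall x r)} with hDdef
  have hDA : ∀ m, D m ⊆ A := fun m x hx => hx.1
  have hDmono : Monotone D := by
    intro m m' hmm x hx
    refine ⟨hx.1, fun r hr hr' => hx.2 r hr (hr'.trans ?_)⟩
    have h1 : (0:ℝ) < (m:ℝ)+1 := by positivity
    have h2 : ((m:ℝ)+1) ≤ ((m':ℝ)+1) := by
      have : (m:ℝ) ≤ (m':ℝ) := by exact_mod_cast hmm
      linarith
    exact one_div_le_one_div_of_le h1 h2
  -- per-piece estimate via the grid
  have hDgrid : ∀ m : ℕ, volume (f '' D m) ≤ ENNReal.ofReal ε := by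
    intro m
    set η : ℝ := 1/(5*((m:ℝ)+1)) with hηdef
    have hm1 : (0:ℝ) < (m:ℝ)+1 := by positivity
    have hη : 0 < η := by positivity
    have hη1 : η ≤ 1 := by
      rw [hηdef, div_le_one (by positivity)]
      nlinarith
    have hgrid := aux_grid (f := f) (A' := D m) (c := 1/(3*((m:ℝ)+1))) (κ := 9*K/T)
      (η := η) (R := R) (by positivity) hη (by positivity) ?_ ctr hR
      (fun x hx => hA (hDA m hx)) ?_
    · refine hgrid.trans (ENNReal.ofReal_le_ofReal ?_)
      have hkey : (2*R/η + 2)^2 * (4*(9*K/T)*η^2) = (2*R+2*η)^2*(36*K)/T := by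
        field_simp
        ring
      rw [hkey]
      have h1 : (2*R+2*η)^2 ≤ (2*R+2)^2 := by nlinarith
      have h2 : (2*R+2*η)^2*(36*K)/T ≤ C/T := by
        rw [hCdef]
        exact (div_le_div_iff_of_pos_right hTpos).mpr (by nlinarith)
      exact h2.trans hCT
    · rw [hηdef]
      have e1 : 2*(1/(5*((m:ℝ)+1)))^2 = 2/(25*((m:ℝ)+1)^2) := by
        field_simp
        ring
      have e2 : (1/(3*((m:ℝ)+1)))^2 = 1/(9*((m:ℝ)+1)^2) := by
        field_simp
        ring
      rw [e1, e2, div_le_div_iff₀ (by positivity) (by positivity)]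
      nlinarith
    · intro x hx y hy hdxy
      exact aux_chain hK hp hT hx.1 hy.1 hx.2 hdxy
  -- the complement of ⋃ D m in A is null
  set Nset : Set (EuclideanSpace ℝ (Fin 2)) := A \ ⋃ m, D m with hNdef
  have hN0 : volume Nset = 0 := by
    set H := toMeasurable volume A with hHdef
    have hHm : MeasurableSet H := measurableSet_toMeasurable _ _
    have hbesi := Besicovitch.ae_tendsto_measure_inter_div (volume : Measure (EuclideanSpace ℝ (Fin 2))) A
    rw [ae_iff] at hbesi
    have h0 : volume ({x | ¬ Tendsto (fun r => volume (A ∩ closedBall x r) / volume (closedBall x r))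
        (𝓝[>] 0) (𝓝 1)} ∩ H) = 0 := by
      rw [← Measure.restrict_apply' hHm, hHdef, MeasureTheory.Measure.restrict_toMeasurable_of_sFinite]
      exact hbesi
    refine measure_mono_null ?_ h0
    intro x hx
    refine ⟨?_, subset_toMeasurable volume A hx.1⟩
    intro hT'
    apply hx.2
    have hδpos : (0:ℝ) < 1/(8*(T:ℝ)^2) := by positivity
    have hlt : ENNReal.ofReal (1 - 1/(8*(T:ℝ)^2)) < 1 := by
      apply ENNReal.ofReal_lt_one.2
      linarith
    have hev : ∀ᶠ r in 𝓝[>] (0:ℝ), ENNReal.ofReal (1 - 1/(8*(T:ℝ)^2))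
        ≤ volume (A ∩ closedBall x r) / volume (closedBall x r) :=
      hT'.eventually (eventually_ge_nhds hlt)
    obtain ⟨u, hu, hsub⟩ := mem_nhdsGT_iff_exists_Ioc_subset.1 hev
    obtain ⟨n, hn⟩ := exists_nat_ge (1/u)
    have hu0 : (0:ℝ) < u := hu
    refine mem_iUnion.2 ⟨n, hx.1, fun r hr hr' => ?_⟩
    have hru : r ≤ u := by
      refine hr'.trans ?_
      rw [div_le_iff₀ (by positivity)]
      rw [div_le_iff₀ hu0] at hn
      nlinarith
    have hmem := hsub ⟨hr, hru⟩
    have hb0 : volume (closedBall x r) ≠ 0 := (measure_closedBall_pos volume x hr).ne'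
    have hbt : volume (closedBall x r) ≠ ⊤ := measure_closedBall_lt_top.ne
    simp only [mem_setOf_eq] at hmem
    exact (ENNReal.le_div_iff_mul_le (Or.inl hb0) (Or.inl hbt)).1 hmem
  have hfN : volume (f '' Nset) = 0 :=
    aux_image_null_of_null hK
      (fun x hx y hy => hp x (hx.1) y (hy.1)) hN0
  -- combine
  have hsplit : f '' A ⊆ f '' Nset ∪ ⋃ m, f '' D m := by
    rintro - ⟨x, hx, rfl⟩
    by_cases hxD : x ∈ ⋃ m, D m
    · obtain ⟨m, hm⟩ := mem_iUnion.1 hxD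
      exact Or.inr (mem_iUnion.2 ⟨m, ⟨x, hm, rfl⟩⟩)
    · exact Or.inl ⟨x, ⟨hx, hxD⟩, rfl⟩
  calc volume (f '' A) ≤ volume (f '' Nset ∪ ⋃ m, f '' D m) := measure_mono hsplit
    _ ≤ volume (f '' Nset) + volume (⋃ m, f '' D m) := measure_union_le _ _
    _ = volume (⋃ m, f '' D m) := by rw [hfN, zero_add]
    _ = ⨆ m, volume (f '' D m) := by
        apply Monotone.measure_iUnion
        intro m m' hmm
        exact image_mono (hDmono hmm)
    _ ≤ ENNReal.ofReal ε := iSup_le hDgrid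


set_option maxHeartbeats 1600000 in
/-- Morse-Sard for the proximal subdifferential in the plane: for every lower
semicontinuous `f : ℝ² → ℝ`, the set `f({x : 0 ∈ ∂_P f(x)})` is Lebesgue-null,
where `0 ∈ ∂_P f(x)` iff there are `σ, η > 0` with `f(y) ≥ f(x) − σ|y−x|²`
for all `y ∈ B(x,η)`. -/
theorem morse_sard_proximal_plane (f : EuclideanSpace ℝ (Fin 2) → ℝ)
    (hf : LowerSemicontinuous f) :
    volume (f '' {x : EuclideanSpace ℝ (Fin 2) | ∃ σ > (0 : ℝ), ∃ η > (0 : ℝ),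
      ∀ y ∈ Metric.ball x η, f x - σ * ‖y - x‖ ^ 2 ≤ f y}) = 0 := by
  obtain ⟨s, hs_cnt, hs_dense⟩ :=
    TopologicalSpace.exists_countable_dense (EuclideanSpace ℝ (Fin 2))
  set piece : ℕ → EuclideanSpace ℝ (Fin 2) → Set (EuclideanSpace ℝ (Fin 2)) := fun n d =>
    {x | x ∈ closedBall d (1/(4*((n:ℝ)+1))) ∧
      ∀ y ∈ ball x (1/((n:ℝ)+1)), f x - ((n:ℝ)+1)*‖y - x‖^2 ≤ f y} with hpiecedef
  have hcover : {x : EuclideanSpace ℝ (Fin 2) | ∃ σ > (0 : ℝ), ∃ η > (0 : ℝ),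
      ∀ y ∈ Metric.ball x η, f x - σ * ‖y - x‖ ^ 2 ≤ f y}
      ⊆ ⋃ n : ℕ, ⋃ d ∈ s, piece n d := by
    rintro x ⟨σ, hσ, η, hη, hx⟩
    obtain ⟨n₁, hn₁⟩ := exists_nat_ge σ
    obtain ⟨n₂, hn₂⟩ := exists_nat_ge (1/η)
    set n : ℕ := n₁ ⊔ n₂ with hndef
    have hn1 : σ ≤ (n:ℝ)+1 := by
      have : (n₁:ℝ) ≤ (n:ℝ) := by exact_mod_cast le_max_left n₁ n₂
      linarith
    have hn2 : 1/((n:ℝ)+1) ≤ η := by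
      have h1 : (n₂:ℝ) ≤ (n:ℝ) := by exact_mod_cast le_max_right n₁ n₂
      have h2 : 1/η ≤ (n:ℝ)+1 := by linarith
      rw [div_le_iff₀ hη] at h2
      rw [div_le_iff₀ (by positivity)]
      nlinarith
    obtain ⟨d, hd1, hd2⟩ := Metric.dense_iff.1 hs_dense x (1/(4*((n:ℝ)+1))) (by positivity)
    refine mem_iUnion.2 ⟨n, mem_biUnion hd2 ?_⟩
    constructor
    · rw [mem_closedBall, dist_comm]
      rw [mem_ball] at hd1
      exact hd1.le
    · intro y hy
      have hyη : y ∈ ball x η := by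
        rw [mem_ball] at hy ⊢
        exact lt_of_lt_of_le hy hn2
      have h1 := hx y hyη
      have h2 : σ * ‖y - x‖^2 ≤ ((n:ℝ)+1) * ‖y - x‖^2 :=
        mul_le_mul_of_nonneg_right hn1 (sq_nonneg _)
      linarith
  apply measure_mono_null (image_mono hcover)
  have himg : f '' (⋃ n : ℕ, ⋃ d ∈ s, piece n d)
      ⊆ ⋃ n : ℕ, ⋃ d ∈ s, f '' piece n d := by
    rintro - ⟨x, hx, rfl⟩
    obtain ⟨n, hn⟩ := mem_iUnion.1 hx
    obtain ⟨d, hd, hxp⟩ := mem_iUnion₂.1 hn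
    exact mem_iUnion.2 ⟨n, mem_biUnion hd ⟨x, hxp, rfl⟩⟩
  apply measure_mono_null himg
  apply measure_iUnion_null
  intro n
  apply (measure_biUnion_null_iff hs_cnt).2
  intro d hd
  have hn0 : (0:ℝ) < (n:ℝ)+1 := by positivity
  apply aux_main (K := (n:ℝ)+1) (R := 1/(4*((n:ℝ)+1))) (by positivity) d (by positivity)
  · intro x hx
    exact hx.1
  · intro x hx y hy
    have hdxy : dist x y < 1/((n:ℝ)+1) := by
      have h1 : dist x d ≤ 1/(4*((n:ℝ)+1)) := hx.1
      have h2 : dist y d ≤ 1/(4*((n:ℝ)+1)) := hy.1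
      have h3 : dist x y ≤ dist x d + dist y d := dist_triangle_right x y d
      have h4 : 1/(4*((n:ℝ)+1)) + 1/(4*((n:ℝ)+1)) < 1/((n:ℝ)+1) := by
        rw [← add_div, div_lt_div_iff₀ (by positivity) hn0]
        ring_nf
        nlinarith
      linarith
    have hyx : y ∈ ball x (1/((n:ℝ)+1)) := by
      rw [mem_ball, dist_comm]
      exact hdxy
    have hxy : x ∈ ball y (1/((n:ℝ)+1)) := by
      rw [mem_ball]
      exact hdxy
    have h1 := hx.2 y hyx
    have h2 := hy.2 x hxy
    rw [abs_sub_le_iff]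
    constructor
    · have : ‖y - x‖ = ‖x - y‖ := norm_sub_rev y x
      rw [this] at h1
      linarith
    · linarith
end
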